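/- Let F be a field and a ∈ F×. Consider the set Ω_F ⊆ [-∞,∞]^F defined as cl(A) \ {-∞,0,∞}^F, where A is the set of all functions v : F → [-∞,∞] with v(0) = ∞, v(1) = 0, v(2) ≠ -∞, v(xy) = v(x)+v(y) whenever {v(x),v(y)} ≠ {-∞,∞}, and v(x+y) ≥ min(v(x),v(y)) + min(v(2),0), the closure being taken in the product topology of [-∞,∞]^F, and where {-∞,0,∞}^F denotes the functions valued only in {-∞,0,∞}. The multiplicative group ℝ_{>0} acts on Ω_F by pointwise scaling (with c·(±∞) = ±∞), and Ω̄_F denotes the quotient space Ω_F/ℝ_{>0} with the quotient topology. Then the subset Ω̄_F(a) ⊆ Ω̄_F consisting of the classes of those v ∈ Ω_F with 0 < v(a) < ∞ is Hausdorff in the subspace topology. -/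

import Mathlib

open scoped ENNReal

variable (F : Type*) [Field F]

/-- The set `A` of functions `v : F → [-∞,∞]` with `v 0 = ∞`, `v 1 = 0`, `v 2 ≠ -∞`,
`v (xy) = v x + v y` whenever the sum is defined, and
`v (x+y) ≥ min (v x) (v y) + min (v 2) 0`. -/
def preValSet : Set (F → EReal) :=
  {v | v 0 = ⊤ ∧ v 1 = 0 ∧ v 2 ≠ ⊥ ∧
    (∀ x y, ¬((v x = ⊥ ∧ v y = ⊤) ∨ (v x = ⊤ ∧ v y = ⊥)) → v (x * y) = v x + v y) ∧
    ∀ x y, min (v x) (v y) + min (v 2) 0 ≤ v (x + y)}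

/-- The space `Ω_F`: the closure of `A` in the product space `[-∞,∞]^F`, minus the
functions valued in `{-∞,0,∞}`. -/
def OmegaF : Set (F → EReal) :=
  closure (preValSet F) \ {v | ∀ x, v x ∈ ({⊥, 0, ⊤} : Set EReal)}

/-- The relation of being a positive real scalar multiple (pointwise, with
`c·(±∞) = ±∞`) on `Ω_F`. -/
def omegaRel (v w : OmegaF F) : Prop :=
  ∃ c : ℝ, 0 < c ∧ ∀ x, (w : F → EReal) x = (c : EReal) * (v : F → EReal) x

/-- `Ω̄_F = Ω_F / ℝ_{>0}` carries the quotient topology. -/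
noncomputable instance : TopologicalSpace (Quot (omegaRel F)) :=
  TopologicalSpace.coinduced (Quot.mk (omegaRel F)) inferInstance

/- ### Auxiliary material -/

private lemma ereal_mul_mul (r s : ℝ) (t : EReal) :
    (r : EReal) * ((s : EReal) * t) = ((r * s : ℝ) : EReal) * t := by
  rw [← mul_assoc, ← EReal.coe_mul]

private lemma omegaRel_equivalence : Equivalence (omegaRel F) := by
  constructor
  · exact fun v => ⟨1, one_pos, fun x => by rw [EReal.coe_one, one_mul]⟩
  · rintro v w ⟨c, hc, h⟩
    exact ⟨c⁻¹, inv_pos.2 hc, fun x => by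
      rw [h x, ereal_mul_mul, inv_mul_cancel₀ hc.ne', EReal.coe_one, one_mul]⟩
  · rintro u v w ⟨c, hc, h⟩ ⟨d, hd, h'⟩
    exact ⟨d * c, mul_pos hd hc, fun x => by rw [h' x, h x, ereal_mul_mul]⟩

private lemma quot_mk_eq_iff (v w : OmegaF F) :
    Quot.mk (omegaRel F) v = Quot.mk (omegaRel F) w ↔ omegaRel F v w := by
  rw [Quot.eq]
  exact (omegaRel_equivalence F).eqvGen_iff

variable {F}

/-- The normalization of `v` making its value at `a` equal to `1`. -/
private noncomputable def nm (a : F) (v : F → EReal) : F → EReal :=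
  fun x => ((((v a).toReal)⁻¹ : ℝ) : EReal) * v x

private lemma toReal_pos_aux {v : F → EReal} {a : F} (h1 : 0 < v a) (h2 : v a < ⊤) :
    0 < (v a).toReal ∧ ((v a).toReal : EReal) = v a := by
  have hne : v a ≠ ⊥ := fun h => by simp [h] at h1
  have := EReal.coe_toReal h2.ne hne
  refine ⟨?_, this⟩
  rw [← EReal.coe_pos, this]; exact h1

/-- `v` is recovered from its normalization. -/
private lemma eq_toReal_mul_nm {v : F → EReal} {a : F} (h1 : 0 < v a) (h2 : v a < ⊤)
    (x : F) : v x = (((v a).toReal : ℝ) : EReal) * nm a v x := by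
  obtain ⟨hr, -⟩ := toReal_pos_aux h1 h2
  rw [nm, ereal_mul_mul, mul_inv_cancel₀ hr.ne', EReal.coe_one, one_mul]

/-- Invariance of the normalization under positive rescaling. -/
private lemma nm_invariant {v w : F → EReal} {a : F} {c : ℝ} (hc : 0 < c)
    (h : ∀ x, w x = (c : EReal) * v x) (h1 : 0 < v a) (h2 : v a < ⊤) :
    (0 < w a ∧ w a < ⊤) ∧ nm a w = nm a v := by
  obtain ⟨hr, hcoe⟩ := toReal_pos_aux h1 h2
  have hwa : w a = ((c * (v a).toReal : ℝ) : EReal) := by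
    rw [h a, EReal.coe_mul, hcoe]
  have hpos : 0 < c * (v a).toReal := mul_pos hc hr
  refine ⟨⟨by rw [hwa]; exact_mod_cast hpos, by rw [hwa]; exact EReal.coe_lt_top _⟩, ?_⟩
  funext x
  rw [nm, nm, h x, hwa, EReal.toReal_coe, ereal_mul_mul]
  congr 2
  field_simp

/-- Equal normalizations give related elements. -/
private lemma rel_of_nm_eq {v w : F → EReal} {a : F} (hv1 : 0 < v a) (hv2 : v a < ⊤)
    (hw1 : 0 < w a) (hw2 : w a < ⊤) (h : nm a v = nm a w) :
    ∃ c : ℝ, 0 < c ∧ ∀ x, w x = (c : EReal) * v x := by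
  obtain ⟨hrv, -⟩ := toReal_pos_aux hv1 hv2
  obtain ⟨hrw, -⟩ := toReal_pos_aux hw1 hw2
  refine ⟨(w a).toReal * ((v a).toReal)⁻¹, mul_pos hrw (inv_pos.2 hrv), fun x => ?_⟩
  rw [eq_toReal_mul_nm hw1 hw2 x, ← h, nm, ereal_mul_mul]

/-- The basic open sets used for the separation. -/
private lemma isOpen_nm_preimage (a x : F) {W : Set EReal} (hW : IsOpen W) :
    IsOpen {v : F → EReal | (0 < v a ∧ v a < ⊤) ∧ nm a v x ∈ W} := by
  have hU0 : IsOpen {v : F → EReal | v a ∈ Set.Ioo (0 : EReal) ⊤} :=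
    isOpen_Ioo.preimage (continuous_apply a)
  have hcont : ContinuousOn (fun v : F → EReal => nm a v x)
      {v : F → EReal | v a ∈ Set.Ioo (0 : EReal) ⊤} := by
    have h1 : ContinuousOn (fun v : F → EReal => ((v a).toReal)⁻¹)
        {v : F → EReal | v a ∈ Set.Ioo (0 : EReal) ⊤} := by
      apply ContinuousOn.inv₀
      · exact EReal.continuousOn_toReal.comp (continuous_apply a).continuousOn
          (fun v hv => by
            simp only [Set.mem_compl_iff, Set.mem_insert_iff, Set.mem_singleton_iff]
            obtain ⟨hr, hcoe⟩ := toReal_pos_aux hv.1 hv.2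
            push_neg
            exact ⟨fun h => by simp [h] at hv, hv.2.ne⟩)
      · intro v hv
        exact (toReal_pos_aux hv.1 hv.2).1.ne'
    intro v hv
    have hmul : ContinuousAt (fun p : EReal × EReal => p.1 * p.2)
        (((((v a).toReal)⁻¹ : ℝ) : EReal), v x) := by
      apply EReal.continuousAt_mul
      all_goals simp only
      · left; exact_mod_cast (inv_pos.2 (toReal_pos_aux hv.1 hv.2).1).ne'
      · left; exact_mod_cast (inv_pos.2 (toReal_pos_aux hv.1 hv.2).1).ne'
      · left; exact EReal.coe_ne_bot _
      · left; exact EReal.coe_ne_top _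
    have hpair : ContinuousWithinAt
        (fun v : F → EReal => ((((((v a).toReal)⁻¹ : ℝ)) : EReal), v x))
        {v : F → EReal | v a ∈ Set.Ioo (0 : EReal) ⊤} v :=
      ContinuousWithinAt.prodMk ((continuous_coe_real_ereal.comp_continuousOn h1) v hv)
        ((continuous_apply x).continuousWithinAt)
    exact Filter.Tendsto.comp hmul hpair
  have : {v : F → EReal | (0 < v a ∧ v a < ⊤) ∧ nm a v x ∈ W} =
      {v : F → EReal | v a ∈ Set.Ioo (0 : EReal) ⊤} ∩
        (fun v : F → EReal => nm a v x) ⁻¹' W := by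
    ext v
    simp [Set.mem_Ioo, and_assoc]
  rw [this]
  exact hcont.isOpen_inter_preimage hU0 hW

variable (F)

/-- For `a ∈ F×`, the subset `Ω̄_F(a) ⊆ Ω̄_F` of classes of `v ∈ Ω_F` with
`0 < v a < ∞` is Hausdorff. -/
theorem omegaBar_a_t2Space (a : F) (ha : a ≠ 0) :
    T2Space {q : Quot (omegaRel F) //
      q ∈ Quot.mk (omegaRel F) ''
        {v : OmegaF F | 0 < (v : F → EReal) a ∧ (v : F → EReal) a < ⊤}} := by
  constructor
  rintro ⟨p, hp⟩ ⟨q, hq⟩ hpq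
  obtain ⟨v1, hv1, rfl⟩ := hp
  obtain ⟨v2, hv2, rfl⟩ := hq
  have hne : nm a (v1 : F → EReal) ≠ nm a (v2 : F → EReal) := by
    intro h
    apply hpq
    exact Subtype.ext ((quot_mk_eq_iff F v1 v2).2
      (rel_of_nm_eq hv1.1 hv1.2 hv2.1 hv2.2 h))
  obtain ⟨x, hx⟩ : ∃ x, nm a (v1 : F → EReal) x ≠ nm a (v2 : F → EReal) x := by
    by_contra h
    push_neg at h
    exact hne (funext h)
  obtain ⟨W1, W2, hW1, hW2, hm1, hm2, hdisj⟩ := t2_separation hx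
  -- the saturated open sets in `OmegaF F`
  set C : Set EReal → Set (OmegaF F) := fun W =>
    {u : OmegaF F | (0 < (u : F → EReal) a ∧ (u : F → EReal) a < ⊤) ∧
      nm a (u : F → EReal) x ∈ W} with hC
  have hCopen : ∀ W, IsOpen W → IsOpen (C W) := fun W hW =>
    (isOpen_nm_preimage a x hW).preimage continuous_subtype_val
  have hCinv : ∀ W (u w : OmegaF F), omegaRel F u w → u ∈ C W → w ∈ C W := by
    rintro W u w ⟨c, hc, h⟩ ⟨⟨h1, h2⟩, h3⟩
    obtain ⟨hcond, hnm⟩ := nm_invariant hc h h1 h2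
    exact ⟨hcond, by rw [hnm]; exact h3⟩
  have hsat : ∀ W, Quot.mk (omegaRel F) ⁻¹' (Quot.mk (omegaRel F) '' C W) = C W := by
    intro W
    ext u
    simp only [Set.mem_preimage, Set.mem_image]
    constructor
    · rintro ⟨w, hw, hwu⟩
      exact hCinv W w u ((quot_mk_eq_iff F w u).1 hwu) hw
    · exact fun hu => ⟨u, hu, rfl⟩
  have hUopen : ∀ W, IsOpen W → IsOpen (Quot.mk (omegaRel F) '' C W) := by
    intro W hW
    rw [isOpen_coinduced, hsat]
    exact hCopen W hW
  refine ⟨Subtype.val ⁻¹' (Quot.mk (omegaRel F) '' C W1),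
    Subtype.val ⁻¹' (Quot.mk (omegaRel F) '' C W2),
    (hUopen W1 hW1).preimage continuous_subtype_val,
    (hUopen W2 hW2).preimage continuous_subtype_val,
    ⟨v1, ⟨hv1, hm1⟩, rfl⟩, ⟨v2, ⟨hv2, hm2⟩, rfl⟩, ?_⟩
  rw [Set.disjoint_iff]
  rintro ⟨s, hs⟩ ⟨⟨u1, hu1, he1⟩, ⟨u2, hu2, he2⟩⟩
  have : u2 ∈ C W1 :=
    hCinv W1 u1 u2 ((quot_mk_eq_iff F u1 u2).1 (he1.trans he2.symm)) hu1
  exact hdisj.le_bot ⟨this.2, hu2.2⟩
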